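/- Let (A_i)_{i∈I} and (B_j)_{j∈J} be POVMs on a finite-dimensional complex Hilbert space H, each measured via its Lüders channel, and define the fidelity-based disturbances D_F(A;ψ) = 1 − Σ_i ⟨ψ, A_i^{1/2} ψ⟩² and D_F(B;ψ) = 1 − Σ_j ⟨ψ, B_j^{1/2} ψ⟩² for unit vectors ψ. Then the infimum over unit vectors ψ of (1/2)[D_F(A;ψ) + D_F(B;ψ)] equals 0 if and only if all the positive operators A_i and B_j have a common eigenvector, i.e. there exists a unit vector ψ and scalars λ_i, μ_j with A_i ψ = λ_i ψ for all i and B_j ψ = μ_j ψ for all j. -/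

import Mathlib

open Matrix
open scoped ComplexOrder InnerProductSpace
open scoped ComplexOrder

noncomputable def Matrix.PosSemidef.sqrt {n 𝕜 : Type*} [Fintype n] [RCLike 𝕜] [DecidableEq n]
    {A : Matrix n n 𝕜} (hA : A.PosSemidef) : Matrix n n 𝕜 :=
  hA.1.eigenvectorUnitary.1 * diagonal ((↑) ∘ (√·) ∘ hA.1.eigenvalues) *
  (star hA.1.eigenvectorUnitary : Matrix n n 𝕜)

lemma Matrix.PosSemidef.posSemidef_sqrt {n 𝕜 : Type*} [Fintype n] [RCLike 𝕜] [DecidableEq n]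
    {A : Matrix n n 𝕜} (hA : A.PosSemidef) : hA.sqrt.PosSemidef := by
  unfold Matrix.PosSemidef.sqrt
  rw [star_eq_conjTranspose]
  refine PosSemidef.mul_mul_conjTranspose_same (PosSemidef.diagonal ?_) _
  intro i
  simp only [Function.comp_apply, Pi.zero_apply]
  exact RCLike.ofReal_nonneg.mpr (Real.sqrt_nonneg _)

lemma Matrix.PosSemidef.sqrt_mul_self {n 𝕜 : Type*} [Fintype n] [RCLike 𝕜] [DecidableEq n]
    {A : Matrix n n 𝕜} (hA : A.PosSemidef) : hA.sqrt * hA.sqrt = A := by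
  unfold Matrix.PosSemidef.sqrt
  conv_rhs => rw [hA.1.spectral_theorem]
  rw [Unitary.conjStarAlgAut_apply]
  have hU : (star hA.1.eigenvectorUnitary : Matrix n n 𝕜) * hA.1.eigenvectorUnitary.1 = 1 :=
    Unitary.coe_star_mul_self _
  have hD : diagonal ((↑) ∘ (√·) ∘ hA.1.eigenvalues : n → 𝕜) *
      diagonal ((↑) ∘ (√·) ∘ hA.1.eigenvalues) = diagonal (RCLike.ofReal ∘ hA.1.eigenvalues) := by
    rw [diagonal_mul_diagonal]
    congr 1
    funext i
    simp only [Function.comp_apply, ← RCLike.ofReal_mul]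
    rw [Real.mul_self_sqrt (hA.eigenvalues_nonneg i)]
  calc _ = hA.1.eigenvectorUnitary.1 * diagonal ((↑) ∘ (√·) ∘ hA.1.eigenvalues : n → 𝕜) *
      ((star hA.1.eigenvectorUnitary : Matrix n n 𝕜) * hA.1.eigenvectorUnitary.1) *
      diagonal ((↑) ∘ (√·) ∘ hA.1.eigenvalues) * (star hA.1.eigenvectorUnitary : Matrix n n 𝕜) := by
        simp only [Matrix.mul_assoc]
    _ = _ := by rw [hU, Matrix.mul_one, Matrix.mul_assoc _ (diagonal _) (diagonal _), hD]


section Helpers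
variable {n : ℕ}

/-- real-valuedness of PSD quadratic forms -/
lemma psd_quad_real {M : Matrix (Fin n) (Fin n) ℂ} (hM : M.PosSemidef) (ψ : Fin n → ℂ) :
    star ψ ⬝ᵥ M *ᵥ ψ = ((star ψ ⬝ᵥ M *ᵥ ψ).re : ℂ) ∧ 0 ≤ (star ψ ⬝ᵥ M *ᵥ ψ).re := by
  obtain ⟨h1, h2⟩ := Complex.nonneg_iff.mp (hM.dotProduct_mulVec_nonneg ψ)
  exact ⟨Complex.ext rfl (by simpa using h2.symm), h1⟩

lemma star_self_real (v : Fin n → ℂ) :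
    star v ⬝ᵥ v = (((star v ⬝ᵥ v).re : ℝ) : ℂ) ∧ 0 ≤ (star v ⬝ᵥ v).re := by
  obtain ⟨h1, h2⟩ := Complex.nonneg_iff.mp (dotProduct_star_self_nonneg v)
  exact ⟨Complex.ext rfl (by simpa using h2.symm), h1⟩

/-- norm of the euclidean version -/
lemma norm_sq_eq (ψ : Fin n → ℂ) :
    ‖(WithLp.equiv 2 (Fin n → ℂ)).symm ψ‖ ^ 2 = (star ψ ⬝ᵥ ψ).re := by
  have h : ⟪(WithLp.equiv 2 (Fin n → ℂ)).symm ψ, (WithLp.equiv 2 (Fin n → ℂ)).symm ψ⟫_ℂ = star ψ ⬝ᵥ ψ :=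
    (EuclideanSpace.inner_toLp_toLp ψ ψ).trans (dotProduct_comm _ _)
  have h2 : ⟪(WithLp.equiv 2 (Fin n → ℂ)).symm ψ, (WithLp.equiv 2 (Fin n → ℂ)).symm ψ⟫_ℂ
      = ((‖(WithLp.equiv 2 (Fin n → ℂ)).symm ψ‖ : ℝ) : ℂ) ^ 2 :=
    inner_self_eq_norm_sq_to_K _
  rw [h] at h2
  have := congrArg Complex.re h2.symm
  rw [← Complex.ofReal_pow, Complex.ofReal_re] at this
  exact this

lemma unit_iff (ψ : Fin n → ℂ) :
    star ψ ⬝ᵥ ψ = 1 ↔ ‖(WithLp.equiv 2 (Fin n → ℂ)).symm ψ‖ = 1 := by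
  obtain ⟨hre, hnn⟩ := star_self_real ψ
  constructor
  · intro h
    have : (star ψ ⬝ᵥ ψ).re = 1 := by rw [h]; simp
    have h2 := norm_sq_eq ψ
    rw [this] at h2
    nlinarith [norm_nonneg ((WithLp.equiv 2 (Fin n → ℂ)).symm ψ)]
  · intro h
    have h2 := norm_sq_eq ψ
    rw [h] at h2
    rw [hre, ← h2]
    norm_num

end Helpers

/-- Cauchy–Schwarz bound and equality case for PSD quadratic forms. -/
lemma cs_key {n : ℕ} {T : Matrix (Fin n) (Fin n) ℂ} (hT : T.PosSemidef)
    {ψ : Fin n → ℂ} (hψ : star ψ ⬝ᵥ ψ = 1) :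
    ((star ψ ⬝ᵥ T *ᵥ ψ).re) ^ 2 ≤ (star ψ ⬝ᵥ (T * T) *ᵥ ψ).re ∧
    (((star ψ ⬝ᵥ T *ᵥ ψ).re) ^ 2 = (star ψ ⬝ᵥ (T * T) *ᵥ ψ).re →
      ∃ c : ℝ, 0 ≤ c ∧ T *ᵥ ψ = (c : ℂ) • ψ) := by
  set x : EuclideanSpace ℂ (Fin n) := (WithLp.equiv 2 (Fin n → ℂ)).symm ψ with hxdef
  set y : EuclideanSpace ℂ (Fin n) := (WithLp.equiv 2 (Fin n → ℂ)).symm (T *ᵥ ψ) with hydef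
  have hx1 : ‖x‖ = 1 := (unit_iff ψ).mp hψ
  have hinner : ⟪x, y⟫_ℂ = star ψ ⬝ᵥ T *ᵥ ψ :=
    (EuclideanSpace.inner_toLp_toLp ψ (T *ᵥ ψ)).trans (dotProduct_comm _ _)
  obtain ⟨hre, hnn⟩ := psd_quad_real hT ψ
  set f : ℝ := (star ψ ⬝ᵥ T *ᵥ ψ).re with hfdef
  -- ‖y‖² equals the quadratic form of T*T
  have hsq : star (T *ᵥ ψ) ⬝ᵥ (T *ᵥ ψ) = star ψ ⬝ᵥ (T * T) *ᵥ ψ :=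
    calc star (T *ᵥ ψ) ⬝ᵥ (T *ᵥ ψ) = (star ψ ᵥ* Tᴴ) ⬝ᵥ (T *ᵥ ψ) := by rw [star_mulVec]
      _ = star ψ ⬝ᵥ Tᴴ *ᵥ (T *ᵥ ψ) := (dotProduct_mulVec _ _ _).symm
      _ = star ψ ⬝ᵥ (T * T) *ᵥ ψ := by rw [Matrix.mulVec_mulVec, hT.1.eq]
  have hyn : ‖y‖ ^ 2 = (star ψ ⬝ᵥ (T * T) *ᵥ ψ).re := by
    have := norm_sq_eq (T *ᵥ ψ)
    rw [hsq] at this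
    exact this
  have hynn : (0:ℝ) ≤ ‖y‖ := norm_nonneg y
  -- Cauchy–Schwarz
  have hcs : f ≤ ‖y‖ := by
    have h1 : ‖⟪x, y⟫_ℂ‖ ≤ ‖x‖ * ‖y‖ := norm_inner_le_norm x y
    rw [hinner, hre, hx1, one_mul] at h1
    calc f ≤ ‖((f : ℝ) : ℂ)‖ := by
            rw [Complex.norm_real]; exact le_abs_self f
      _ ≤ ‖y‖ := h1
  constructor
  · rw [← hyn]
    calc f ^ 2 ≤ ‖y‖ ^ 2 := by nlinarith
      _ = ‖y‖ ^ 2 := rfl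
  · intro heq
    have hfy : f = ‖y‖ := by
      rw [← hyn] at heq
      exact (sq_eq_sq₀ hnn hynn).mp heq
    have hinner2 : ⟪x, y⟫_ℂ = (‖x‖ : ℂ) * ‖y‖ := by
      rw [hinner, hre, hfy, hx1]
      norm_num
    have := inner_eq_norm_mul_iff.mp hinner2
    rw [hx1] at this
    -- (‖y‖ : ℂ) • x = 1 • y
    have hy' : y = (‖y‖ : ℂ) • x := by
      simpa using this.symm
    refine ⟨‖y‖, hynn, ?_⟩
    have := congrArg (WithLp.equiv 2 (Fin n → ℂ)) hy'
    simpa [hxdef, hydef] using this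

/-- An eigenvector of a PSD matrix is an eigenvector of its square root. -/
lemma sqrt_eigen {n : ℕ} {M : Matrix (Fin n) (Fin n) ℂ} (hM : M.PosSemidef)
    {ψ : Fin n → ℂ} {l : ℝ} (hl : 0 ≤ l) (h : M *ᵥ ψ = (l : ℂ) • ψ) :
    hM.sqrt *ᵥ ψ = ((Real.sqrt l : ℝ) : ℂ) • ψ := by
  set T := hM.sqrt with hTdef
  have hT : T.PosSemidef := hM.posSemidef_sqrt
  have hTT : T * T = M := hM.sqrt_mul_self
  rcases eq_or_lt_of_le hl with hl0 | hlpos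
  · -- l = 0
    have hM0 : M *ᵥ ψ = 0 := by rw [h, ← hl0]; simp
    have hq : star ψ ⬝ᵥ M *ᵥ ψ = 0 := by rw [hM0]; simp
    have hTψ : star (T *ᵥ ψ) ⬝ᵥ (T *ᵥ ψ) = 0 := by
      calc star (T *ᵥ ψ) ⬝ᵥ (T *ᵥ ψ) = (star ψ ᵥ* Tᴴ) ⬝ᵥ (T *ᵥ ψ) := by rw [star_mulVec]
        _ = star ψ ⬝ᵥ Tᴴ *ᵥ (T *ᵥ ψ) := (dotProduct_mulVec _ _ _).symm
        _ = star ψ ⬝ᵥ M *ᵥ ψ := by rw [Matrix.mulVec_mulVec, hT.1.eq, hTT]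
        _ = 0 := hq
    have : T *ᵥ ψ = 0 := dotProduct_star_self_eq_zero.mp hTψ
    rw [this, ← hl0]
    simp
  · -- l > 0
    set c : ℝ := Real.sqrt l with hcdef
    have hc : c ^ 2 = l := Real.sq_sqrt hl
    have hcpos : 0 < c := Real.sqrt_pos.mpr hlpos
    set v : Fin n → ℂ := T *ᵥ ψ - (c : ℂ) • ψ with hvdef
    have hkey : T *ᵥ v + (c : ℂ) • v = 0 := by
      have h1 : T *ᵥ v = (l : ℂ) • ψ - (c : ℂ) • (T *ᵥ ψ) := by
        rw [hvdef, mulVec_sub, Matrix.mulVec_smul, Matrix.mulVec_mulVec, hTT, h]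
      have h2 : (c : ℂ) • v = (c : ℂ) • (T *ᵥ ψ) - (l : ℂ) • ψ := by
        rw [hvdef, smul_sub, smul_smul, ← Complex.ofReal_mul, ← pow_two, hc]
      rw [h1, h2]; abel
    have hdot : star v ⬝ᵥ T *ᵥ v + (c : ℂ) * (star v ⬝ᵥ v) = 0 := by
      have := congrArg (fun w => star v ⬝ᵥ w) hkey
      simpa [dotProduct_add, dotProduct_smul, smul_eq_mul] using this
    obtain ⟨hvre, hvnn⟩ := star_self_real v
    have hnn1 : (0 : ℂ) ≤ star v ⬝ᵥ T *ᵥ v := hT.dotProduct_mulVec_nonneg v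
    have hnn2 : (0 : ℂ) ≤ (c : ℂ) * (star v ⬝ᵥ v) := by
      rw [hvre, ← Complex.ofReal_mul]
      exact Complex.zero_le_real.mpr (mul_nonneg hcpos.le hvnn)
    have h0 : (c : ℂ) * (star v ⬝ᵥ v) = 0 :=
      ((add_eq_zero_iff_of_nonneg hnn1 hnn2).mp hdot).2
    have hv0 : v = 0 := by
      apply dotProduct_star_self_eq_zero.mp
      rcases mul_eq_zero.mp h0 with hc0 | hv0
      · exact absurd hc0 (by exact_mod_cast hcpos.ne')
      · exact hv0
    have : T *ᵥ ψ - (c : ℂ) • ψ = 0 := hv0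
    rw [sub_eq_zero] at this
    exact this

lemma quad_sum_one {n : ℕ} {I : Type*} [Fintype I] (A : I → Matrix (Fin n) (Fin n) ℂ)
    (hAsum : ∑ i, A i = 1) {ψ : Fin n → ℂ} (hψ : star ψ ⬝ᵥ ψ = 1) :
    ∑ i, (star ψ ⬝ᵥ (A i) *ᵥ ψ).re = 1 := by
  have hv : (∑ i, A i) *ᵥ ψ = ∑ i, (A i) *ᵥ ψ := by
    ext k
    simp only [mulVec, dotProduct, Finset.sum_apply, Matrix.sum_apply, Finset.sum_mul]
    exact Finset.sum_comm
  have h1 : ∑ i, (star ψ ⬝ᵥ (A i) *ᵥ ψ) = star ψ ⬝ᵥ (∑ i, A i) *ᵥ ψ := by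
    rw [hv]
    simp only [dotProduct, Finset.sum_apply, Finset.mul_sum]
    exact Finset.sum_comm
  rw [hAsum, one_mulVec, hψ] at h1
  have := congrArg Complex.re h1
  rw [Complex.re_sum] at this
  simpa using this

lemma cont_quad {n : ℕ} (M : Matrix (Fin n) (Fin n) ℂ) :
    Continuous fun ψ : Fin n → ℂ => (star ψ ⬝ᵥ M *ᵥ ψ).re := by
  apply Complex.continuous_re.comp
  simp only [dotProduct, mulVec, Pi.star_apply]
  apply continuous_finset_sum
  intro k _
  exact ((continuous_apply k).star).mul
    (continuous_finset_sum _ fun l _ => continuous_const.mul (continuous_apply l))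

/-- For two POVMs `(A i)` and `(B j)` on a (nonzero)
finite-dimensional complex Hilbert space, each measured via its Lüders channel, with
fidelity-based disturbances `D_F(A;ψ) = 1 - ∑ i ⟨ψ, √(A i) ψ⟩²` (and likewise for
`B`), the infimum over unit vectors of the average disturbance vanishes iff all the
operators `A i` and `B j` have a common eigenvector. -/
theorem lueders_disturbance_tradeoff_zero_iff {n : ℕ} (hn : 0 < n)
    {I J : Type*} [Fintype I] [Fintype J]
    (A : I → Matrix (Fin n) (Fin n) ℂ) (B : J → Matrix (Fin n) (Fin n) ℂ)
    (hA : ∀ i, (A i).PosSemidef) (hAsum : ∑ i, A i = 1)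
    (hB : ∀ j, (B j).PosSemidef) (hBsum : ∑ j, B j = 1) :
    sInf {x : ℝ | ∃ ψ : Fin n → ℂ, star ψ ⬝ᵥ ψ = 1 ∧
        x = (1 / 2) * ((1 - ∑ i, ((star ψ ⬝ᵥ (hA i).sqrt *ᵥ ψ).re) ^ 2)
              + (1 - ∑ j, ((star ψ ⬝ᵥ (hB j).sqrt *ᵥ ψ).re) ^ 2))} = 0
      ↔ ∃ ψ : Fin n → ℂ, star ψ ⬝ᵥ ψ = 1 ∧
          (∀ i, ∃ lam : ℂ, (A i) *ᵥ ψ = lam • ψ) ∧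
          (∀ j, ∃ mu : ℂ, (B j) *ᵥ ψ = mu • ψ) := by
  classical
  set D : (Fin n → ℂ) → ℝ := fun ψ =>
    (1 / 2) * ((1 - ∑ i, ((star ψ ⬝ᵥ (hA i).sqrt *ᵥ ψ).re) ^ 2)
      + (1 - ∑ j, ((star ψ ⬝ᵥ (hB j).sqrt *ᵥ ψ).re) ^ 2)) with hD
  set S : Set ℝ := {x : ℝ | ∃ ψ : Fin n → ℂ, star ψ ⬝ᵥ ψ = 1 ∧ x = D ψ} with hSdef
  -- per-index Cauchy–Schwarz bounds
  have hcsA : ∀ (i : I) {ψ : Fin n → ℂ}, star ψ ⬝ᵥ ψ = 1 →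
      ((star ψ ⬝ᵥ (hA i).sqrt *ᵥ ψ).re) ^ 2 ≤ (star ψ ⬝ᵥ (A i) *ᵥ ψ).re := by
    intro i ψ hψ
    have h := (cs_key (hA i).posSemidef_sqrt hψ).1
    rwa [(hA i).sqrt_mul_self] at h
  have hcsB : ∀ (j : J) {ψ : Fin n → ℂ}, star ψ ⬝ᵥ ψ = 1 →
      ((star ψ ⬝ᵥ (hB j).sqrt *ᵥ ψ).re) ^ 2 ≤ (star ψ ⬝ᵥ (B j) *ᵥ ψ).re := by
    intro j ψ hψ
    have h := (cs_key (hB j).posSemidef_sqrt hψ).1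
    rwa [(hB j).sqrt_mul_self] at h
  have hsumA : ∀ {ψ : Fin n → ℂ}, star ψ ⬝ᵥ ψ = 1 →
      ∑ i, ((star ψ ⬝ᵥ (hA i).sqrt *ᵥ ψ).re) ^ 2 ≤ 1 := by
    intro ψ hψ
    calc ∑ i, ((star ψ ⬝ᵥ (hA i).sqrt *ᵥ ψ).re) ^ 2
        ≤ ∑ i, (star ψ ⬝ᵥ (A i) *ᵥ ψ).re :=
          Finset.sum_le_sum fun i _ => hcsA i hψ
      _ = 1 := quad_sum_one A hAsum hψ
  have hsumB : ∀ {ψ : Fin n → ℂ}, star ψ ⬝ᵥ ψ = 1 →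
      ∑ j, ((star ψ ⬝ᵥ (hB j).sqrt *ᵥ ψ).re) ^ 2 ≤ 1 := by
    intro ψ hψ
    calc ∑ j, ((star ψ ⬝ᵥ (hB j).sqrt *ᵥ ψ).re) ^ 2
        ≤ ∑ j, (star ψ ⬝ᵥ (B j) *ᵥ ψ).re :=
          Finset.sum_le_sum fun j _ => hcsB j hψ
      _ = 1 := quad_sum_one B hBsum hψ
  have hnonneg : ∀ x ∈ S, (0 : ℝ) ≤ x := by
    rintro x ⟨ψ, hψ, rfl⟩
    have h1 := hsumA hψ
    have h2 := hsumB hψ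
    simp only [hD]
    linarith
  constructor
  · -- infimum zero → common eigenvector
    intro h0
    -- compactness: minimize D over the unit sphere
    have hDcont : Continuous D := by
      apply continuous_const.mul
      apply Continuous.add
      · exact continuous_const.sub (continuous_finset_sum _ fun i _ => (cont_quad _).pow 2)
      · exact continuous_const.sub (continuous_finset_sum _ fun j _ => (cont_quad _).pow 2)
    have hGcont : Continuous fun x : EuclideanSpace ℂ (Fin n) => D (WithLp.equiv 2 _ x) :=
      hDcont.comp (PiLp.continuousLinearEquiv 2 ℂ (fun _ : Fin n => ℂ)).continuous
    have hsph_ne : (Metric.sphere (0 : EuclideanSpace ℂ (Fin n)) 1).Nonempty := by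
      refine ⟨(WithLp.equiv 2 (Fin n → ℂ)).symm (Pi.single ⟨0, hn⟩ 1), ?_⟩
      rw [Metric.mem_sphere, dist_zero_right]
      refine (unit_iff _).mp ?_
      simp [dotProduct, Pi.single_apply, apply_ite]
    obtain ⟨x₀, hx₀mem, hx₀min⟩ := (isCompact_sphere (0 : EuclideanSpace ℂ (Fin n)) 1).exists_isMinOn
      hsph_ne hGcont.continuousOn
    set ψ₀ : Fin n → ℂ := WithLp.equiv 2 (Fin n → ℂ) x₀ with hψ₀def
    have hx₀eq : (WithLp.equiv 2 (Fin n → ℂ)).symm ψ₀ = x₀ := by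
      simp [hψ₀def]
    have hψ₀ : star ψ₀ ⬝ᵥ ψ₀ = 1 := by
      rw [unit_iff, hx₀eq]
      simpa [dist_zero_right] using hx₀mem
    have hmem : D ψ₀ ∈ S := ⟨ψ₀, hψ₀, rfl⟩
    have hlb : ∀ x ∈ S, D ψ₀ ≤ x := by
      rintro x ⟨ψ, hψ, rfl⟩
      have hmem' : (WithLp.equiv 2 (Fin n → ℂ)).symm ψ ∈
          Metric.sphere (0 : EuclideanSpace ℂ (Fin n)) 1 := by
        rw [Metric.mem_sphere, dist_zero_right]
        exact (unit_iff ψ).mp hψ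
      have := hx₀min hmem'
      simpa [hx₀eq, hψ₀def] using this
    have hD0 : D ψ₀ = 0 := by
      have h1 : D ψ₀ ≤ 0 := by
        rw [← h0]
        exact le_csInf ⟨_, hmem⟩ hlb
      exact le_antisymm h1 (hnonneg _ hmem)
    -- extract: both sums equal 1
    have hSA1 := hsumA hψ₀
    have hSB1 := hsumB hψ₀
    have hSA : ∑ i, ((star ψ₀ ⬝ᵥ (hA i).sqrt *ᵥ ψ₀).re) ^ 2 = 1 := by
      simp only [hD] at hD0; linarith
    have hSB : ∑ j, ((star ψ₀ ⬝ᵥ (hB j).sqrt *ᵥ ψ₀).re) ^ 2 = 1 := by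
      simp only [hD] at hD0; linarith
    refine ⟨ψ₀, hψ₀, ?_, ?_⟩
    · -- A family
      intro i
      have hzero : ∑ i, ((star ψ₀ ⬝ᵥ (A i) *ᵥ ψ₀).re
          - ((star ψ₀ ⬝ᵥ (hA i).sqrt *ᵥ ψ₀).re) ^ 2) = 0 := by
        rw [Finset.sum_sub_distrib, quad_sum_one A hAsum hψ₀, hSA]; ring
      have heach := (Finset.sum_eq_zero_iff_of_nonneg
        (fun i _ => sub_nonneg.mpr (hcsA i hψ₀))).mp hzero i (Finset.mem_univ i)
      have heq : ((star ψ₀ ⬝ᵥ (hA i).sqrt *ᵥ ψ₀).re) ^ 2 = (star ψ₀ ⬝ᵥ (A i) *ᵥ ψ₀).re := by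
        linarith [sub_eq_zero.mp heach]
      have hk := (cs_key (hA i).posSemidef_sqrt hψ₀).2
      rw [(hA i).sqrt_mul_self] at hk
      obtain ⟨c, hc, hTψ⟩ := hk heq
      refine ⟨((c : ℂ)) ^ 2, ?_⟩
      calc (A i) *ᵥ ψ₀ = ((hA i).sqrt * (hA i).sqrt) *ᵥ ψ₀ := by rw [(hA i).sqrt_mul_self]
        _ = (hA i).sqrt *ᵥ ((hA i).sqrt *ᵥ ψ₀) := by rw [Matrix.mulVec_mulVec]
        _ = (hA i).sqrt *ᵥ ((c : ℂ) • ψ₀) := by rw [hTψ]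
        _ = (c : ℂ) • ((hA i).sqrt *ᵥ ψ₀) := Matrix.mulVec_smul _ _ _
        _ = (c : ℂ) • ((c : ℂ) • ψ₀) := by rw [hTψ]
        _ = ((c : ℂ)) ^ 2 • ψ₀ := by rw [smul_smul, ← pow_two]
    · -- B family
      intro j
      have hzero : ∑ j, ((star ψ₀ ⬝ᵥ (B j) *ᵥ ψ₀).re
          - ((star ψ₀ ⬝ᵥ (hB j).sqrt *ᵥ ψ₀).re) ^ 2) = 0 := by
        rw [Finset.sum_sub_distrib, quad_sum_one B hBsum hψ₀, hSB]; ring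
      have heach := (Finset.sum_eq_zero_iff_of_nonneg
        (fun j _ => sub_nonneg.mpr (hcsB j hψ₀))).mp hzero j (Finset.mem_univ j)
      have heq : ((star ψ₀ ⬝ᵥ (hB j).sqrt *ᵥ ψ₀).re) ^ 2 = (star ψ₀ ⬝ᵥ (B j) *ᵥ ψ₀).re := by
        linarith [sub_eq_zero.mp heach]
      have hk := (cs_key (hB j).posSemidef_sqrt hψ₀).2
      rw [(hB j).sqrt_mul_self] at hk
      obtain ⟨c, hc, hTψ⟩ := hk heq
      refine ⟨((c : ℂ)) ^ 2, ?_⟩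
      calc (B j) *ᵥ ψ₀ = ((hB j).sqrt * (hB j).sqrt) *ᵥ ψ₀ := by rw [(hB j).sqrt_mul_self]
        _ = (hB j).sqrt *ᵥ ((hB j).sqrt *ᵥ ψ₀) := by rw [Matrix.mulVec_mulVec]
        _ = (hB j).sqrt *ᵥ ((c : ℂ) • ψ₀) := by rw [hTψ]
        _ = (c : ℂ) • ((hB j).sqrt *ᵥ ψ₀) := Matrix.mulVec_smul _ _ _
        _ = (c : ℂ) • ((c : ℂ) • ψ₀) := by rw [hTψ]
        _ = ((c : ℂ)) ^ 2 • ψ₀ := by rw [smul_smul, ← pow_two]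
  · -- common eigenvector → infimum zero
    rintro ⟨ψ, hψ, hAe, hBe⟩
    -- eigenvalues are real and nonnegative; the disturbance vanishes at ψ
    have heigA : ∀ i, ((star ψ ⬝ᵥ (hA i).sqrt *ᵥ ψ).re) ^ 2 = (star ψ ⬝ᵥ (A i) *ᵥ ψ).re := by
      intro i
      obtain ⟨lam, hlam⟩ := hAe i
      obtain ⟨hre, hnn⟩ := psd_quad_real (hA i) ψ
      have hq : star ψ ⬝ᵥ (A i) *ᵥ ψ = lam := by
        rw [hlam, dotProduct_smul, hψ, smul_eq_mul, mul_one]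
      rw [hq] at hre hnn ⊢
      have hAe' : (A i) *ᵥ ψ = ((lam.re : ℝ) : ℂ) • ψ := by rw [hlam, ← hre]
      have hsq := sqrt_eigen (hA i) hnn hAe'
      rw [hsq, dotProduct_smul, hψ, smul_eq_mul, mul_one]
      simp [Real.sq_sqrt hnn]
    have heigB : ∀ j, ((star ψ ⬝ᵥ (hB j).sqrt *ᵥ ψ).re) ^ 2 = (star ψ ⬝ᵥ (B j) *ᵥ ψ).re := by
      intro j
      obtain ⟨mu, hmu⟩ := hBe j
      obtain ⟨hre, hnn⟩ := psd_quad_real (hB j) ψ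
      have hq : star ψ ⬝ᵥ (B j) *ᵥ ψ = mu := by
        rw [hmu, dotProduct_smul, hψ, smul_eq_mul, mul_one]
      rw [hq] at hre hnn ⊢
      have hBe' : (B j) *ᵥ ψ = ((mu.re : ℝ) : ℂ) • ψ := by rw [hmu, ← hre]
      have hsq := sqrt_eigen (hB j) hnn hBe'
      rw [hsq, dotProduct_smul, hψ, smul_eq_mul, mul_one]
      simp [Real.sq_sqrt hnn]
    have hDψ : D ψ = 0 := by
      simp only [hD]
      have h1 : ∑ i, ((star ψ ⬝ᵥ (hA i).sqrt *ᵥ ψ).re) ^ 2 = 1 := by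
        calc ∑ i, ((star ψ ⬝ᵥ (hA i).sqrt *ᵥ ψ).re) ^ 2
            = ∑ i, (star ψ ⬝ᵥ (A i) *ᵥ ψ).re := Finset.sum_congr rfl fun i _ => heigA i
          _ = 1 := quad_sum_one A hAsum hψ
      have h2 : ∑ j, ((star ψ ⬝ᵥ (hB j).sqrt *ᵥ ψ).re) ^ 2 = 1 := by
        calc ∑ j, ((star ψ ⬝ᵥ (hB j).sqrt *ᵥ ψ).re) ^ 2
            = ∑ j, (star ψ ⬝ᵥ (B j) *ᵥ ψ).re := Finset.sum_congr rfl fun j _ => heigB j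
          _ = 1 := quad_sum_one B hBsum hψ
      rw [h1, h2]; ring
    have hmem : (0 : ℝ) ∈ S := ⟨ψ, hψ, hDψ.symm⟩
    exact le_antisymm (csInf_le ⟨0, hnonneg⟩ hmem) (le_csInf ⟨0, hmem⟩ hnonneg)
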